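/- arXiv:2311.04603 — 2 statements merged into one kernel-verified Lean document; each statement's English description precedes it below -/
import Mathlib

section
/- Monotonicity of the Wardrop equilibrium in the market size: fix service capacities N₁, …, N_k ∈ ℕ (each ≥ 1) and μ > 0. If 0 < Λ < Λ', λ is a Wardrop equilibrium for total arrival rate Λ and λ' is a Wardrop equilibrium for total arrival rate Λ', then λᵢ < λ'ᵢ for every i = 1, …, k. -/
/-- The Erlang-B blocking probability with `M` servers and offered load `a`:
`B(M, a) = (a^M / M!) / (∑_{j=0}^{M} a^j / j!)`. -/
noncomputable def ErlangB (M : ℕ) (a : ℝ) : ℝ :=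
  (a ^ M / (Nat.factorial M : ℝ)) / (∑ j ∈ Finset.range (M + 1), a ^ j / (Nat.factorial j : ℝ))

/-- A Wardrop equilibrium: positive arrival rates summing to `Λ` that equalize the
Erlang-B blocking probabilities of all coalitions. -/
def IsWardropEquilibrium (k : ℕ) (N : Fin k → ℕ) (μ Λ : ℝ) (lam : Fin k → ℝ) : Prop :=
  (∀ i, 0 < lam i) ∧ (∑ i, lam i = Λ) ∧
    ∀ i j, ErlangB (N i) (lam i / μ) = ErlangB (N j) (lam j / μ)

lemma erlang_sum_pos (M : ℕ) {a : ℝ} (ha : 0 < a) :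
    0 < ∑ j ∈ Finset.range (M + 1), a ^ j / (Nat.factorial j : ℝ) := by
  apply Finset.sum_pos
  · intro j _
    have : (0:ℝ) < Nat.factorial j := by exact_mod_cast Nat.factorial_pos j
    positivity
  · exact ⟨0, Finset.mem_range.mpr (Nat.succ_pos M)⟩

lemma erlangB_pos (M : ℕ) {a : ℝ} (ha : 0 < a) : 0 < ErlangB M a := by
  unfold ErlangB
  apply div_pos _ (erlang_sum_pos M ha)
  have : (0:ℝ) < Nat.factorial M := by exact_mod_cast Nat.factorial_pos M
  positivity

lemma one_div_erlangB (M : ℕ) {x : ℝ} (hx : 0 < x) :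
    1 / ErlangB M x =
      ∑ j ∈ Finset.range (M + 1),
        ((Nat.factorial M : ℝ) / (Nat.factorial j : ℝ)) * (x ^ j / x ^ M) := by
  have hM : ((Nat.factorial M : ℝ)) ≠ 0 := by
    exact_mod_cast (Nat.factorial_pos M).ne'
  have hxM : x ^ M ≠ 0 := pow_ne_zero _ hx.ne'
  unfold ErlangB
  rw [one_div_div, Finset.sum_div]
  apply Finset.sum_congr rfl
  intro j _
  have hj : ((Nat.factorial j : ℝ)) ≠ 0 := by
    exact_mod_cast (Nat.factorial_pos j).ne'
  field_simp

lemma erlangB_strictMono (M : ℕ) (hM : 1 ≤ M) {a b : ℝ} (ha : 0 < a) (hab : a < b) :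
    ErlangB M a < ErlangB M b := by
  have hb : 0 < b := ha.trans hab
  have hBa : 0 < ErlangB M a := erlangB_pos M ha
  have hBb : 0 < ErlangB M b := erlangB_pos M hb
  rw [← one_div_lt_one_div hBb hBa]
  rw [one_div_erlangB M ha, one_div_erlangB M hb]
  have hratio : ∀ x : ℝ, 0 < x → ∀ j, j ≤ M → x ^ j / x ^ M = 1 / x ^ (M - j) := by
    intro x hx j hj
    have hxj : x ^ j ≠ 0 := pow_ne_zero _ hx.ne'
    have hsplit : x ^ M = x ^ j * x ^ (M - j) := by
      rw [← pow_add]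
      congr 1
      omega
    rw [hsplit, div_mul_eq_div_div, div_self hxj]
  apply Finset.sum_lt_sum
  · intro j hjmem
    have hj : j ≤ M := Nat.lt_succ_iff.mp (Finset.mem_range.mp hjmem)
    rw [hratio a ha j hj, hratio b hb j hj]
    have hcoef : (0:ℝ) ≤ (Nat.factorial M : ℝ) / (Nat.factorial j : ℝ) := by positivity
    apply mul_le_mul_of_nonneg_left _ hcoef
    exact one_div_le_one_div_of_le (pow_pos ha _) (pow_le_pow_left₀ ha.le hab.le _)
  · refine ⟨0, Finset.mem_range.mpr (Nat.succ_pos M), ?_⟩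
    rw [hratio a ha 0 (Nat.zero_le M), hratio b hb 0 (Nat.zero_le M)]
    have hcoef : (0:ℝ) < (Nat.factorial M : ℝ) / (Nat.factorial 0 : ℝ) := by
      have : (0:ℝ) < Nat.factorial M := by exact_mod_cast Nat.factorial_pos M
      simp [Nat.factorial]
      positivity
    apply mul_lt_mul_of_pos_left _ hcoef
    apply one_div_lt_one_div_of_lt (pow_pos ha _)
    exact pow_lt_pow_left₀ hab ha.le (by omega)

/-- Monotonicity of the Wardrop equilibrium in the market size: fix capacities
`N₁, …, N_k` (each `≥ 1`) and `μ > 0`.  If `0 < Λ < Λ'`, `λ` is a Wardrop equilibrium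
for total arrival rate `Λ` and `λ'` one for total arrival rate `Λ'`, then `λᵢ < λ'ᵢ`
for every `i`. -/
theorem wardrop_mono_in_market_size (k : ℕ) (N : Fin k → ℕ) (hN : ∀ i, 1 ≤ N i)
    (μ : ℝ) (hμ : 0 < μ) (Λ Λ' : ℝ) (hΛ : 0 < Λ) (hΛΛ' : Λ < Λ')
    (lam lam' : Fin k → ℝ)
    (h : IsWardropEquilibrium k N μ Λ lam)
    (h' : IsWardropEquilibrium k N μ Λ' lam') :
    ∀ i, lam i < lam' i := by
  obtain ⟨hpos, hsum, heq⟩ := h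
  obtain ⟨hpos', hsum', heq'⟩ := h'
  intro i
  by_contra hle
  push_neg at hle
  have hall : ∀ j, lam' j ≤ lam j := by
    intro j
    by_contra hj
    push_neg at hj
    have h1 : ErlangB (N i) (lam' i / μ) ≤ ErlangB (N i) (lam i / μ) := by
      rcases eq_or_lt_of_le hle with hEq | hlt
      · rw [hEq]
      · exact (erlangB_strictMono (N i) (hN i) (div_pos (hpos' i) hμ)
          ((div_lt_div_iff_of_pos_right hμ).mpr hlt)).le
    have h2 : ErlangB (N j) (lam j / μ) < ErlangB (N j) (lam' j / μ) :=
      erlangB_strictMono (N j) (hN j) (div_pos (hpos j) hμ)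
        ((div_lt_div_iff_of_pos_right hμ).mpr hj)
    have : ErlangB (N j) (lam j / μ) < ErlangB (N j) (lam j / μ) := by
      calc ErlangB (N j) (lam j / μ) < ErlangB (N j) (lam' j / μ) := h2
        _ = ErlangB (N i) (lam' i / μ) := heq' j i
        _ ≤ ErlangB (N i) (lam i / μ) := h1
        _ = ErlangB (N j) (lam j / μ) := heq i j
    exact lt_irrefl _ this
  have : Λ' ≤ Λ := by
    rw [← hsum, ← hsum']
    exact Finset.sum_le_sum fun j _ => hall j
  linarith
end

section
/- Economies of scale from a merger under the Wardrop equilibrium: fix k ≥ 3, service capacities N₁, …, N_k ∈ ℕ (each ≥ 1), Λ > 0 and μ > 0. Let λ = (λ₁, …, λ_k) be the Wardrop equilibrium for capacities (N₁, …, N_k), and let λ' = (λ'₁, …, λ'_{k−1}) be the Wardrop equilibrium for the capacities (N₁ + N₂, N₃, …, N_k) obtained by merging the first two coalitions. Then λ'₁ > λ₁ + λ₂. -/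
/-! ### Auxiliary development: the reciprocal of the Erlang-B formula -/

/-- The reciprocal of Erlang-B: `invB M a = ∑_{i=0}^{M} M^{(i)} a^{-i}` where
`M^{(i)}` is the descending factorial. -/
noncomputable def invB (M : ℕ) (a : ℝ) : ℝ :=
  ∑ i ∈ Finset.range (M + 1), (Nat.descFactorial M i : ℝ) * (a⁻¹) ^ i

lemma invB_eq_aux (M : ℕ) (a : ℝ) (ha : 0 < a) :
    invB M a = (∑ j ∈ Finset.range (M + 1), a ^ j / (Nat.factorial j : ℝ))
      * ((Nat.factorial M : ℝ) / a ^ M) := by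
  rw [Finset.sum_mul, invB, ← Finset.sum_range_reflect
    (fun j => a ^ j / (Nat.factorial j : ℝ) * ((Nat.factorial M : ℝ) / a ^ M)) (M + 1)]
  refine Finset.sum_congr rfl ?_
  intro i hi
  have hiM : i ≤ M := by
    have := Finset.mem_range.mp hi; omega
  have hsimp : M + 1 - 1 - i = M - i := by omega
  rw [hsimp]
  have hfac : ((M - i).factorial : ℝ) * (Nat.descFactorial M i : ℝ) = (Nat.factorial M : ℝ) := by
    exact_mod_cast Nat.factorial_mul_descFactorial hiM
  have hpow : a ^ (M - i) = a ^ M * (a ^ i)⁻¹ := pow_sub₀ a ha.ne' hiM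
  rw [hpow]
  have ha' : a ≠ 0 := ha.ne'
  have hfi : ((M - i).factorial : ℝ) ≠ 0 := by positivity
  have hpM : a ^ M ≠ 0 := by positivity
  have hpi : a ^ i ≠ 0 := by positivity
  field_simp
  have h1 : a ^ i * a⁻¹ ^ i = 1 := by rw [← mul_pow, mul_inv_cancel₀ ha', one_pow]
  linear_combination hfac + ((Nat.descFactorial M i : ℝ) * ((M - i).factorial : ℝ)) * h1

lemma sumS_pos (M : ℕ) (a : ℝ) (ha : 0 < a) :
    0 < ∑ j ∈ Finset.range (M + 1), a ^ j / (Nat.factorial j : ℝ) := by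
  refine Finset.sum_pos (fun j _ => by positivity) ⟨0, by simp⟩

lemma invB_pos (M : ℕ) (a : ℝ) (ha : 0 < a) : 0 < invB M a := by
  rw [invB_eq_aux M a ha]
  have := sumS_pos M a ha
  positivity

lemma erlangB_eq_inv (M : ℕ) (a : ℝ) (ha : 0 < a) : ErlangB M a = (invB M a)⁻¹ := by
  rw [invB_eq_aux M a ha, ErlangB]
  have hS := (sumS_pos M a ha).ne'
  have hf : ((M).factorial : ℝ) ≠ 0 := by positivity
  have hp : a ^ M ≠ 0 := by positivity
  field_simp

lemma invB_anti (M : ℕ) {a b : ℝ} (ha : 0 < a) (hab : a ≤ b) : invB M b ≤ invB M a := by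
  refine Finset.sum_le_sum (fun i _ => ?_)
  have hb : 0 < b := lt_of_lt_of_le ha hab
  have h1 : b⁻¹ ≤ a⁻¹ := inv_anti₀ ha hab
  have h2 : (0:ℝ) ≤ b⁻¹ := by positivity
  exact mul_le_mul_of_nonneg_left (pow_le_pow_left₀ h2 h1 i) (Nat.cast_nonneg _)

lemma invB_strict_anti (M : ℕ) (hM : 1 ≤ M) {a b : ℝ} (ha : 0 < a) (hab : a < b) :
    invB M b < invB M a := by
  have hb : 0 < b := ha.trans hab
  refine Finset.sum_lt_sum (fun i _ => ?_) ⟨1, Finset.mem_range.mpr (by omega), ?_⟩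
  · have h1 : b⁻¹ ≤ a⁻¹ := inv_anti₀ ha hab.le
    exact mul_le_mul_of_nonneg_left (pow_le_pow_left₀ (by positivity) h1 i) (Nat.cast_nonneg _)
  · have h1 : b⁻¹ < a⁻¹ := inv_strictAnti₀ ha hab
    have hMpos : (0:ℝ) < (Nat.descFactorial M 1 : ℝ) := by
      rw [Nat.descFactorial_one]; exact_mod_cast hM
    simpa [pow_one] using mul_lt_mul_of_pos_left h1 hMpos

/-- Key combinatorial inequality: `M^{(i)} (M+1)^i ≤ (M+1)^{(i)} M^i`. -/
lemma key_nat (M : ℕ) : ∀ i : ℕ,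
    Nat.descFactorial M i * (M + 1) ^ i ≤ Nat.descFactorial (M + 1) i * M ^ i := by
  intro i
  induction i with
  | zero => simp
  | succ i ih =>
    rw [Nat.descFactorial_succ, Nat.descFactorial_succ]
    have h1 : (M - i) * (M + 1) ≤ (M + 1 - i) * M := by
      rcases le_or_gt i M with h | h
      · obtain ⟨d, rfl⟩ := Nat.exists_eq_add_of_le h
        have e1 : i + d - i = d := by omega
        have e2 : i + d + 1 - i = d + 1 := by omega
        rw [e1, e2]
        nlinarith
      · have : M - i = 0 := by omega
        simp [this]
    calc (M - i) * Nat.descFactorial M i * (M + 1) ^ (i + 1)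
        = ((M - i) * (M + 1)) * (Nat.descFactorial M i * (M + 1) ^ i) := by ring
      _ ≤ ((M + 1 - i) * M) * (Nat.descFactorial (M + 1) i * M ^ i) :=
          Nat.mul_le_mul h1 ih
      _ = (M + 1 - i) * Nat.descFactorial (M + 1) i * M ^ (i + 1) := by ring

/-- One scale step: adding a server and scaling the load proportionally increases `invB`. -/
lemma invB_scale (M : ℕ) (hM : 1 ≤ M) (a : ℝ) (ha : 0 < a) :
    invB M a < invB (M + 1) (((M : ℝ) + 1) * a / M) := by
  have hMR : (0:ℝ) < M := by exact_mod_cast hM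
  set a' : ℝ := ((M : ℝ) + 1) * a / M with ha'def
  have ha' : 0 < a' := by positivity
  have hx' : a'⁻¹ = (M : ℝ) * a⁻¹ / ((M : ℝ) + 1) := by
    rw [ha'def]; field_simp
  have hterm : ∀ i ∈ Finset.range (M + 1),
      (Nat.descFactorial M i : ℝ) * (a⁻¹) ^ i
        ≤ (Nat.descFactorial (M + 1) i : ℝ) * (a'⁻¹) ^ i := by
    intro i _
    rw [hx', div_pow, mul_pow, ← mul_div_assoc,
      le_div_iff₀ (by positivity : (0:ℝ) < ((M:ℝ) + 1) ^ i)]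
    have hkey : (Nat.descFactorial M i : ℝ) * ((M:ℝ) + 1) ^ i
        ≤ (Nat.descFactorial (M + 1) i : ℝ) * (M:ℝ) ^ i := by
      have := key_nat M i
      push_cast
      exact_mod_cast this
    calc (Nat.descFactorial M i : ℝ) * (a⁻¹) ^ i * ((M:ℝ) + 1) ^ i
        = ((Nat.descFactorial M i : ℝ) * ((M:ℝ) + 1) ^ i) * (a⁻¹) ^ i := by ring
      _ ≤ ((Nat.descFactorial (M + 1) i : ℝ) * (M:ℝ) ^ i) * (a⁻¹) ^ i :=
          mul_le_mul_of_nonneg_right hkey (by positivity)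
      _ = (Nat.descFactorial (M + 1) i : ℝ) * ((M:ℝ) ^ i * (a⁻¹) ^ i) := by ring
  have htop : 0 < (Nat.descFactorial (M + 1) (M + 1) : ℝ) * (a'⁻¹) ^ (M + 1) := by
    have : 0 < Nat.descFactorial (M + 1) (M + 1) := by
      rw [Nat.descFactorial_self]; exact Nat.factorial_pos _
    have h2 : (0:ℝ) < (a'⁻¹) ^ (M + 1) := by positivity
    have h1 : (0:ℝ) < (Nat.descFactorial (M + 1) (M + 1) : ℝ) := by exact_mod_cast this
    positivity
  calc invB M a ≤ ∑ i ∈ Finset.range (M + 1),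
        (Nat.descFactorial (M + 1) i : ℝ) * (a'⁻¹) ^ i := Finset.sum_le_sum hterm
    _ < ∑ i ∈ Finset.range (M + 1 + 1),
        (Nat.descFactorial (M + 1) i : ℝ) * (a'⁻¹) ^ i := by
        rw [Finset.sum_range_succ (fun i => (Nat.descFactorial (M + 1) i : ℝ) * (a'⁻¹) ^ i)
          (M + 1)]
        linarith
    _ = invB (M + 1) a' := rfl

/-- Iterated scale step. -/
lemma invB_scale_many (M : ℕ) (hM : 1 ≤ M) (n : ℕ) (a : ℝ) (ha : 0 < a) :
    invB M a < invB (M + (n + 1)) (((M : ℝ) + (n + 1)) * a / M) := by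
  induction n with
  | zero =>
    simpa using invB_scale M hM a ha
  | succ n ih =>
    have hMR : (0:ℝ) < M := by exact_mod_cast hM
    have hb : 0 < ((M : ℝ) + (n + 1)) * a / M := by positivity
    have hstep := invB_scale (M + (n + 1)) (by omega) _ hb
    have heq : (((M + (n + 1) : ℕ) : ℝ) + 1) * (((M : ℝ) + (n + 1)) * a / M) / ((M + (n + 1) : ℕ) : ℝ)
        = ((M : ℝ) + (n + 1 + 1)) * a / M := by
      have hne : ((M + (n + 1) : ℕ) : ℝ) ≠ 0 := by positivity
      push_cast
      field_simp
      ring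
    rw [heq] at hstep
    have hc : ((M : ℝ) + (↑(n + 1) + 1)) * a / ↑M = ((M : ℝ) + (↑n + 1 + 1)) * a / ↑M := by
      push_cast; ring
    rw [hc]
    exact ih.trans hstep

lemma invB_merge_aux (M N : ℕ) (hM : 1 ≤ M) (hN : 1 ≤ N) (a b : ℝ) (ha : 0 < a) (hb : 0 < b)
    (hle : b * M ≤ a * N) : invB M a < invB (M + N) (a + b) := by
  have hMR : (0:ℝ) < M := by exact_mod_cast hM
  have hab : a + b ≤ ((M : ℝ) + N) * a / M := by
    rw [le_div_iff₀ hMR]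
    nlinarith
  obtain ⟨n, rfl⟩ : ∃ n, N = n + 1 := ⟨N - 1, by omega⟩
  have h1 := invB_scale_many M hM n a ha
  have h2 : invB (M + (n + 1)) (((M : ℝ) + (n + 1)) * a / M) ≤ invB (M + (n + 1)) (a + b) := by
    apply invB_anti _ (by positivity)
    convert hab using 3
    push_cast; ring
  calc invB M a < invB (M + (n + 1)) (((M : ℝ) + (n + 1)) * a / M) := h1
    _ ≤ invB (M + (n + 1)) (a + b) := h2

lemma invB_merge (M N : ℕ) (hM : 1 ≤ M) (hN : 1 ≤ N) (a b : ℝ) (ha : 0 < a) (hb : 0 < b)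
    (heq : invB M a = invB N b) : invB M a < invB (M + N) (a + b) := by
  rcases le_total (b * M) (a * N) with h | h
  · exact invB_merge_aux M N hM hN a b ha hb h
  · have := invB_merge_aux N M hN hM b a hb ha h
    rw [← heq, add_comm N M, add_comm b a] at this
    exact this

lemma erlangB_lt_of_invB_lt {M N : ℕ} {a b : ℝ} (ha : 0 < a) (hb : 0 < b)
    (h : invB N b < invB M a) : ErlangB M a < ErlangB N b := by
  rw [erlangB_eq_inv M a ha, erlangB_eq_inv N b hb]
  exact inv_strictAnti₀ (invB_pos N b hb) h

lemma erlangB_le_mono {M : ℕ} {a b : ℝ} (ha : 0 < a) (hab : a ≤ b) :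
    ErlangB M a ≤ ErlangB M b := by
  have hb : 0 < b := lt_of_lt_of_le ha hab
  rw [erlangB_eq_inv M a ha, erlangB_eq_inv M b hb]
  exact inv_anti₀ (invB_pos M b hb) (invB_anti M ha hab)

lemma lt_of_erlangB_lt {M : ℕ} (hM : 1 ≤ M) {a b : ℝ} (ha : 0 < a) (hb : 0 < b)
    (h : ErlangB M a < ErlangB M b) : a < b := by
  by_contra hcon
  push_neg at hcon
  exact absurd (erlangB_le_mono hb hcon) (by linarith)

lemma erlangB_merge (M N : ℕ) (hM : 1 ≤ M) (hN : 1 ≤ N) (a b : ℝ) (ha : 0 < a) (hb : 0 < b)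
    (heq : ErlangB M a = ErlangB N b) : ErlangB (M + N) (a + b) < ErlangB M a := by
  have hinv : invB M a = invB N b := by
    have := heq
    rw [erlangB_eq_inv M a ha, erlangB_eq_inv N b hb] at this
    exact inv_injective this
  exact erlangB_lt_of_invB_lt (by positivity) ha (invB_merge M N hM hN a b ha hb hinv)

/-- Economies of scale from a merger under the Wardrop equilibrium: with `k = m + 2 ≥ 3`
coalitions of capacities `N₀, …, N_{k-1}` (each `≥ 1`), total arrival rate `Λ > 0` and
service rate `μ > 0`, let `λ` be the Wardrop equilibrium for `(N₀, …, N_{k-1})` and `λ'`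
the Wardrop equilibrium for the `k - 1` capacities `(N₀ + N₁, N₂, …, N_{k-1})` obtained
by merging the first two coalitions.  Then `λ'₀ > λ₀ + λ₁`. -/
theorem wardrop_merger_economies_of_scale (m : ℕ) (hm : 1 ≤ m)
    (N : Fin (m + 2) → ℕ) (hN : ∀ i, 1 ≤ N i) (Λ μ : ℝ) (hΛ : 0 < Λ) (hμ : 0 < μ)
    (lam : Fin (m + 2) → ℝ) (lam' : Fin (m + 1) → ℝ)
    (h : IsWardropEquilibrium (m + 2) N μ Λ lam)
    (h' : IsWardropEquilibrium (m + 1)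
      (Fin.cons (N 0 + N 1) (fun i : Fin m => N i.succ.succ)) μ Λ lam') :
    lam 0 + lam 1 < lam' 0 := by
  obtain ⟨hpos, hsum, heqB⟩ := h
  obtain ⟨hpos', hsum', heqB'⟩ := h'
  by_contra hcon
  push_neg at hcon
  -- merged blocking at total load of coalitions 0 and 1 is strictly smaller
  have hB01 : ErlangB (N 0) (lam 0 / μ) = ErlangB (N 1) (lam 1 / μ) := heqB 0 1
  have ha : 0 < lam 0 / μ := by have := hpos 0; positivity
  have hb : 0 < lam 1 / μ := by have := hpos 1; positivity
  have hmerge : ErlangB (N 0 + N 1) ((lam 0 + lam 1) / μ) < ErlangB (N 0) (lam 0 / μ) := by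
    have := erlangB_merge (N 0) (N 1) (hN 0) (hN 1) _ _ ha hb hB01
    rwa [← add_div] at this
  have hl0' : 0 < lam' 0 / μ := by have := hpos' 0; positivity
  have hstep : ErlangB (N 0 + N 1) (lam' 0 / μ) ≤ ErlangB (N 0 + N 1) ((lam 0 + lam 1) / μ) := by
    apply erlangB_le_mono hl0'
    gcongr
  -- all new rates for the unmerged coalitions are strictly smaller
  have hsmaller : ∀ i : Fin m, lam' i.succ < lam (i.succ.succ) := by
    intro i
    have key1 := heqB' i.succ 0
    simp only [Fin.cons_succ, Fin.cons_zero] at key1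
    have key2 := heqB i.succ.succ 0
    have hlt : ErlangB (N i.succ.succ) (lam' i.succ / μ)
        < ErlangB (N i.succ.succ) (lam i.succ.succ / μ) := by
      rw [key1, key2]
      calc ErlangB (N 0 + N 1) (lam' 0 / μ)
          ≤ ErlangB (N 0 + N 1) ((lam 0 + lam 1) / μ) := hstep
        _ < ErlangB (N 0) (lam 0 / μ) := hmerge
    have hpi : 0 < lam' i.succ / μ := by have := hpos' i.succ; positivity
    have hpi2 : 0 < lam i.succ.succ / μ := by have := hpos i.succ.succ; positivity
    have := lt_of_erlangB_lt (hN i.succ.succ) hpi hpi2 hlt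
    rwa [div_lt_div_iff_of_pos_right hμ] at this
  -- sum up
  have hsum1 : lam 0 + lam 1 + ∑ i : Fin m, lam i.succ.succ = Λ := by
    rw [← hsum, Fin.sum_univ_succ, Fin.sum_univ_succ]
    simp [add_assoc]
  have hsum2 : lam' 0 + ∑ i : Fin m, lam' i.succ = Λ := by
    rw [← hsum', Fin.sum_univ_succ]
  have hne : (Finset.univ : Finset (Fin m)).Nonempty := ⟨⟨0, hm⟩, Finset.mem_univ _⟩
  have hsumlt : ∑ i : Fin m, lam' i.succ < ∑ i : Fin m, lam i.succ.succ :=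
    Finset.sum_lt_sum_of_nonempty hne (fun i _ => hsmaller i)
  linarith
end
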